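/- arXiv:2203.02253 — 9 statements merged into one kernel-verified Lean document; each statement's English description precedes it below -/
import Mathlib

section
/- For the FKG inequality setting: let μ be a product probability measure on A_N = {-1,0,...,K}^N, let h : A_N → [0,∞) satisfy h(χ)h(χ') ≤ h(χ∧χ')h(χ∨χ') for all χ, χ', with ∫ h dμ > 0, and let F, G : A_N → ℝ be non-decreasing for the componentwise partial order. Then ∫ F G h dμ · ∫ h dμ ≥ ∫ F h dμ · ∫ G h dμ. -/
theorem stmt_4 (K N : ℕ) (hK : 2 ≤ K) (hN : 1 ≤ N)
    (w : Fin N → ℤ → ℝ) (hw0 : ∀ i x, 0 ≤ w i x)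
    (hw1 : ∀ i, ∑ x ∈ Finset.Icc (-1 : ℤ) (K : ℤ), w i x = 1)
    (h : (Fin N → ℤ) → ℝ) (hh0 : ∀ χ, 0 ≤ h χ)
    (hls : ∀ χ χ' : Fin N → ℤ,
      χ ∈ Fintype.piFinset (fun _ : Fin N => Finset.Icc (-1 : ℤ) (K : ℤ)) →
      χ' ∈ Fintype.piFinset (fun _ : Fin N => Finset.Icc (-1 : ℤ) (K : ℤ)) →
      h χ * h χ' ≤ h (fun i => min (χ i) (χ' i)) * h (fun i => max (χ i) (χ' i)))
    (hpos : 0 < ∑ χ ∈ Fintype.piFinset (fun _ : Fin N => Finset.Icc (-1 : ℤ) (K : ℤ)),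
        h χ * ∏ i, w i (χ i))
    (F G : (Fin N → ℤ) → ℝ)
    (hF : ∀ χ χ' : Fin N → ℤ, (∀ i, χ i ≤ χ' i) → F χ ≤ F χ')
    (hG : ∀ χ χ' : Fin N → ℤ, (∀ i, χ i ≤ χ' i) → G χ ≤ G χ') :
    (∑ χ ∈ Fintype.piFinset (fun _ : Fin N => Finset.Icc (-1 : ℤ) (K : ℤ)),
        F χ * h χ * ∏ i, w i (χ i)) *
      (∑ χ ∈ Fintype.piFinset (fun _ : Fin N => Finset.Icc (-1 : ℤ) (K : ℤ)),
        G χ * h χ * ∏ i, w i (χ i)) ≤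
    (∑ χ ∈ Fintype.piFinset (fun _ : Fin N => Finset.Icc (-1 : ℤ) (K : ℤ)),
        F χ * G χ * h χ * ∏ i, w i (χ i)) *
      (∑ χ ∈ Fintype.piFinset (fun _ : Fin N => Finset.Icc (-1 : ℤ) (K : ℤ)),
        h χ * ∏ i, w i (χ i)) := by
  classical
  set S : Finset (Fin N → ℤ) :=
    Fintype.piFinset (fun _ : Fin N => Finset.Icc (-1 : ℤ) (K : ℤ)) with hS
  set e : (Fin N → Fin (K + 2)) → (Fin N → ℤ) := fun σ i => (σ i : ℤ) - 1 with he
  have he_mem : ∀ σ, e σ ∈ S := by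
    intro σ
    simp only [hS, Fintype.mem_piFinset, Finset.mem_Icc, he]
    intro i
    have h1 := (σ i).isLt
    omega
  have he_inj : Function.Injective e := by
    intro a b hab
    funext i
    have := congrFun hab i
    simp only [he] at this
    exact Fin.ext (by omega)
  have himg : S = Finset.image e Finset.univ := by
    ext χ
    simp only [Finset.mem_image, Finset.mem_univ, true_and]
    constructor
    · intro hχ
      simp only [hS, Fintype.mem_piFinset, Finset.mem_Icc] at hχ
      refine ⟨fun i => ⟨(χ i + 1).toNat, ?_⟩, ?_⟩
      · have := hχ i; omega
      · funext i
        have := hχ i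
        simp only [he]
        omega
    · rintro ⟨σ, rfl⟩; exact he_mem σ
  have hsum : ∀ φ : (Fin N → ℤ) → ℝ,
      ∑ χ ∈ S, φ χ = ∑ σ : Fin N → Fin (K + 2), φ (e σ) := by
    intro φ
    rw [himg, Finset.sum_image (fun a _ b _ hab => he_inj hab)]
  -- min/max facts
  have hmin : ∀ a b : Fin N → Fin (K + 2), e (a ⊓ b) = fun i => min (e a i) (e b i) := by
    intro a b
    funext i
    simp only [he, Pi.inf_apply]
    rcases le_total (a i) (b i) with hab | hab
    · have : ((a i : ℤ)) ≤ (b i : ℤ) := by exact_mod_cast hab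
      rw [min_eq_left hab, min_eq_left (by omega)]
    · have : ((b i : ℤ)) ≤ (a i : ℤ) := by exact_mod_cast hab
      rw [min_eq_right hab, min_eq_right (by omega)]
  have hmax : ∀ a b : Fin N → Fin (K + 2), e (a ⊔ b) = fun i => max (e a i) (e b i) := by
    intro a b
    funext i
    simp only [he, Pi.sup_apply]
    rcases le_total (a i) (b i) with hab | hab
    · have : ((a i : ℤ)) ≤ (b i : ℤ) := by exact_mod_cast hab
      rw [max_eq_right hab, max_eq_right (by omega)]
    · have : ((b i : ℤ)) ≤ (a i : ℤ) := by exact_mod_cast hab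
      rw [max_eq_left hab, max_eq_left (by omega)]
  -- the weighted measure
  set μ : (Fin N → Fin (K + 2)) → ℝ := fun σ => h (e σ) * ∏ i, w i (e σ i) with hμ
  have hμ0 : (0 : (Fin N → Fin (K + 2)) → ℝ) ≤ μ := by
    intro σ
    exact mul_nonneg (hh0 _) (Finset.prod_nonneg fun i _ => hw0 _ _)
  have hμls : ∀ a b, μ a * μ b ≤ μ (a ⊓ b) * μ (a ⊔ b) := by
    intro a b
    have hw2 : ∀ i : Fin N, w i (e (a ⊓ b) i) * w i (e (a ⊔ b) i) = w i (e a i) * w i (e b i) := by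
      intro i
      rw [hmin, hmax]
      beta_reduce
      rcases le_total (e a i) (e b i) with hab | hab
      · rw [min_eq_left hab, max_eq_right hab]
      · rw [min_eq_right hab, max_eq_left hab]; ring
    have hw3 : (∏ i, w i (e (a ⊓ b) i)) * (∏ i, w i (e (a ⊔ b) i)) =
        (∏ i, w i (e a i)) * (∏ i, w i (e b i)) := by
      rw [← Finset.prod_mul_distrib, ← Finset.prod_mul_distrib]
      exact Finset.prod_congr rfl fun i _ => hw2 i
    have hh2 : h (e a) * h (e b) ≤ h (e (a ⊓ b)) * h (e (a ⊔ b)) := by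
      rw [hmin, hmax]; exact hls _ _ (he_mem a) (he_mem b)
    have hwn : 0 ≤ (∏ i, w i (e a i)) * (∏ i, w i (e b i)) :=
      mul_nonneg (Finset.prod_nonneg fun i _ => hw0 _ _)
        (Finset.prod_nonneg fun i _ => hw0 _ _)
    simp only [hμ]
    calc h (e a) * (∏ i, w i (e a i)) * (h (e b) * (∏ i, w i (e b i)))
        = (h (e a) * h (e b)) * ((∏ i, w i (e a i)) * (∏ i, w i (e b i))) := by ring
      _ ≤ (h (e (a ⊓ b)) * h (e (a ⊔ b))) * ((∏ i, w i (e a i)) * (∏ i, w i (e b i))) :=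
          mul_le_mul_of_nonneg_right hh2 hwn
      _ = h (e (a ⊓ b)) * (∏ i, w i (e (a ⊓ b) i)) *
          (h (e (a ⊔ b)) * (∏ i, w i (e (a ⊔ b) i))) := by rw [← hw3]; ring
  -- nonnegativity shifts
  haveI : Nonempty (Fin N → Fin (K + 2)) := ⟨fun _ => ⟨0, by omega⟩⟩
  set cF : ℝ := Finset.univ.sup' Finset.univ_nonempty (fun σ => -F (e σ)) with hcF
  set cG : ℝ := Finset.univ.sup' Finset.univ_nonempty (fun σ => -G (e σ)) with hcG
  have hf0 : (0 : (Fin N → Fin (K + 2)) → ℝ) ≤ fun σ => F (e σ) + cF := by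
    intro σ
    have := Finset.le_sup' (fun σ => -F (e σ)) (Finset.mem_univ σ)
    simp only [← hcF] at this
    dsimp; linarith
  have hg0 : (0 : (Fin N → Fin (K + 2)) → ℝ) ≤ fun σ => G (e σ) + cG := by
    intro σ
    have := Finset.le_sup' (fun σ => -G (e σ)) (Finset.mem_univ σ)
    simp only [← hcG] at this
    dsimp; linarith
  have hfmono : Monotone (fun σ => F (e σ) + cF) := by
    intro a b hab
    have : ∀ i, e a i ≤ e b i := by
      intro i
      have : (a i : ℤ) ≤ (b i : ℤ) := by exact_mod_cast hab i
      simp only [he]; omega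
    exact add_le_add_left (hF _ _ this) _
  have hgmono : Monotone (fun σ => G (e σ) + cG) := by
    intro a b hab
    have : ∀ i, e a i ≤ e b i := by
      intro i
      have : (a i : ℤ) ≤ (b i : ℤ) := by exact_mod_cast hab i
      simp only [he]; omega
    exact add_le_add_left (hG _ _ this) _
  have key := fkg (fun σ => F (e σ) + cF) (fun σ => G (e σ) + cG) μ hμ0 hf0 hg0
    hfmono hgmono hμls
  -- rewrite the goal as sums over the fintype
  rw [hsum (fun χ => F χ * h χ * ∏ i, w i (χ i)), hsum (fun χ => G χ * h χ * ∏ i, w i (χ i)),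
    hsum (fun χ => F χ * G χ * h χ * ∏ i, w i (χ i)), hsum (fun χ => h χ * ∏ i, w i (χ i))]
  set Z : ℝ := ∑ σ : Fin N → Fin (K + 2), h (e σ) * ∏ i, w i (e σ i) with hZ
  set AF : ℝ := ∑ σ : Fin N → Fin (K + 2), F (e σ) * h (e σ) * ∏ i, w i (e σ i) with hAF
  set AG : ℝ := ∑ σ : Fin N → Fin (K + 2), G (e σ) * h (e σ) * ∏ i, w i (e σ i) with hAG
  set AFG : ℝ := ∑ σ : Fin N → Fin (K + 2),
    F (e σ) * G (e σ) * h (e σ) * ∏ i, w i (e σ i) with hAFG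
  have eF : ∑ σ : Fin N → Fin (K + 2), μ σ * (F (e σ) + cF) = AF + cF * Z := by
    rw [hAF, hZ, Finset.mul_sum, ← Finset.sum_add_distrib]
    exact Finset.sum_congr rfl fun σ _ => by simp only [hμ]; ring
  have eG : ∑ σ : Fin N → Fin (K + 2), μ σ * (G (e σ) + cG) = AG + cG * Z := by
    rw [hAG, hZ, Finset.mul_sum, ← Finset.sum_add_distrib]
    exact Finset.sum_congr rfl fun σ _ => by simp only [hμ]; ring
  have eFG : ∑ σ : Fin N → Fin (K + 2), μ σ * ((F (e σ) + cF) * (G (e σ) + cG)) =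
      AFG + cG * AF + cF * AG + cF * cG * Z := by
    rw [hAFG, hAF, hAG, hZ, Finset.mul_sum, Finset.mul_sum, Finset.mul_sum,
      ← Finset.sum_add_distrib, ← Finset.sum_add_distrib, ← Finset.sum_add_distrib]
    exact Finset.sum_congr rfl fun σ _ => by simp only [hμ]; ring
  rw [eF, eG] at key
  rw [eFG] at key
  nlinarith [key]
end

section
/- Let K = 2, let p₀, p₁, p₂ > 0 with p₀ + p₁ + p₂ = 1, and let b > 1. Define F(u,v) = (p₀ + p₁u + p₂v², p₀ + p₁u + b·p₂v²). Then the fixed point equation F(u,v) = (u,v) with v real has a solution if and only if b - 1 ≤ (p₀+p₂)/(4p₀p₂) - 1/(p₀+p₂). -/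
theorem stmt_6 (p₀ p₁ p₂ b : ℝ) (h0 : 0 < p₀) (h1 : 0 < p₁) (h2 : 0 < p₂)
    (hsum : p₀ + p₁ + p₂ = 1) (hb : 1 < b) :
    (∃ u v : ℝ, p₀ + p₁ * u + p₂ * v ^ 2 = u ∧ p₀ + p₁ * u + b * p₂ * v ^ 2 = v)
      ↔ b - 1 ≤ (p₀ + p₂) / (4 * p₀ * p₂) - 1 / (p₀ + p₂) := by
  obtain ⟨s, hsdef⟩ : ∃ s : ℝ, s = p₀ + p₂ := ⟨_, rfl⟩
  have hs : 0 < s := by rw [hsdef]; positivity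
  have hs1 : p₁ = 1 - s := by rw [hsdef]; linarith
  obtain ⟨A, hA'⟩ : ∃ A : ℝ, A = p₂ * (1 + (b - 1) * s) := ⟨_, rfl⟩
  have hA : 0 < A := by
    rw [hA']
    have : 0 < 1 + (b - 1) * s := by nlinarith
    positivity
  rw [← hsdef]
  have hquot : s / (4 * p₀ * p₂) - 1 / s - (b - 1)
      = (s ^ 2 - 4 * A * p₀) / (4 * p₀ * p₂ * s) := by
    rw [hA']
    field_simp
    ring
  have key : (0 ≤ s ^ 2 - 4 * A * p₀) ↔ b - 1 ≤ s / (4 * p₀ * p₂) - 1 / s := by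
    constructor
    · intro h
      have h2 : 0 ≤ (s ^ 2 - 4 * A * p₀) / (4 * p₀ * p₂ * s) :=
        div_nonneg h (by positivity)
      linarith [hquot ▸ h2]
    · intro h
      have h2 : 0 ≤ (s ^ 2 - 4 * A * p₀) / (4 * p₀ * p₂ * s) := by
        rw [← hquot]; linarith
      have h3 := mul_nonneg h2 (le_of_lt (show (0:ℝ) < 4 * p₀ * p₂ * s by positivity))
      rwa [div_mul_cancel₀ _ (by positivity : (4 * p₀ * p₂ * s : ℝ) ≠ 0)] at h3
  rw [← key]
  constructor
  · rintro ⟨u, v, e1, e2⟩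
    have hu : s * u = p₀ + p₂ * v ^ 2 := by linear_combination -e1 + u * hs1
    have hq : A * v ^ 2 - s * v + p₀ = 0 := by
      linear_combination v ^ 2 * hA' + s * e2 - s * e1 - hu
    have h4 : 4 * A * (A * v ^ 2 - s * v + p₀) = 0 := by rw [hq]; ring
    nlinarith [sq_nonneg (2 * A * v - s), h4]
  · intro hD
    have hsq : Real.sqrt (s ^ 2 - 4 * A * p₀) ^ 2 = s ^ 2 - 4 * A * p₀ :=
      Real.sq_sqrt hD
    obtain ⟨v, hvdef⟩ : ∃ v : ℝ, v = (s - Real.sqrt (s ^ 2 - 4 * A * p₀)) / (2 * A) :=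
      ⟨_, rfl⟩
    have hv : 2 * A * v = s - Real.sqrt (s ^ 2 - 4 * A * p₀) := by
      rw [hvdef]; field_simp
    have h4 : A * (A * v ^ 2 - s * v + p₀) = 0 := by
      linear_combination ((2 * A * v - s - Real.sqrt (s ^ 2 - 4 * A * p₀)) / 4) * hv
        + (1 / 4) * hsq
    have hq : A * v ^ 2 - s * v + p₀ = 0 := (mul_eq_zero.mp h4).resolve_left hA.ne'
    obtain ⟨u, hu⟩ : ∃ u : ℝ, s * u = p₀ + p₂ * v ^ 2 :=
      ⟨(p₀ + p₂ * v ^ 2) / s, by field_simp⟩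
    refine ⟨u, v, by linear_combination u * hs1 - hu, ?_⟩
    have hT : s * (p₀ + p₁ * u + b * p₂ * v ^ 2) = s * v := by
      linear_combination hq + (1 - s) * hu + (s * u) * hs1 + (-v ^ 2) * hA'
    exact mul_left_cancel₀ hs.ne' hT
end

section
/- Let K = 2, p₀, p₁, p₂ > 0 with p₀ + p₁ + p₂ = 1, and b = 1 + (p₀+p₂)/(4p₀p₂) - 1/(p₀+p₂). Then (u,v) with v = 2p₀/(p₀+p₂) and u = p₀/(p₀+p₂) + 4p₀²p₂/(p₀+p₂)³ is a fixed point of the map F(u,v) = (p₀ + p₁u + p₂v², p₀ + p₁u + b·p₂v²). -/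
theorem stmt_7 (p₀ p₁ p₂ : ℝ) (h0 : 0 < p₀) (h1 : 0 < p₁) (h2 : 0 < p₂)
    (hsum : p₀ + p₁ + p₂ = 1)
    (b : ℝ) (hb : b = 1 + (p₀ + p₂) / (4 * p₀ * p₂) - 1 / (p₀ + p₂))
    (v : ℝ) (hv : v = 2 * p₀ / (p₀ + p₂))
    (u : ℝ) (hu : u = p₀ / (p₀ + p₂) + 4 * p₀ ^ 2 * p₂ / (p₀ + p₂) ^ 3) :
    p₀ + p₁ * u + p₂ * v ^ 2 = u ∧ p₀ + p₁ * u + b * p₂ * v ^ 2 = v := by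
  have hs : p₀ + p₂ ≠ 0 := by positivity
  have hp1 : p₁ = 1 - p₀ - p₂ := by linarith
  subst hb hv hu hp1
  constructor <;> field_simp <;> ring
end

section
/- Let K = 2, p₀, p₁, p₂ > 0 with p₀ + p₁ + p₂ = 1 and p₀ < p₂, and let b > 1. Then the polynomial P(v) = v²p₂(b-1) + (p₂/(p₀+p₂))(v-1)(v - p₀/p₂) has no real root v ≥ 1; in particular the map F(u,v) = (p₀ + p₁u + p₂v², p₀ + p₁u + b p₂ v²) has no fixed point with v ≥ 1. -/
theorem stmt_8 (p₀ p₁ p₂ b : ℝ) (h0 : 0 < p₀) (h1 : 0 < p₁) (h2 : 0 < p₂)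
    (hsum : p₀ + p₁ + p₂ = 1) (h02 : p₀ < p₂) (hb : 1 < b) :
    (∀ v : ℝ, 1 ≤ v →
      v ^ 2 * p₂ * (b - 1) + (p₂ / (p₀ + p₂)) * (v - 1) * (v - p₀ / p₂) ≠ 0) ∧
    (∀ u v : ℝ, 1 ≤ v →
      ¬(p₀ + p₁ * u + p₂ * v ^ 2 = u ∧ p₀ + p₁ * u + b * p₂ * v ^ 2 = v)) := by
  have hpos : 0 < p₀ + p₂ := by linarith
  have key : ∀ v : ℝ, 1 ≤ v →
      0 < v ^ 2 * p₂ * (b - 1) + (p₂ / (p₀ + p₂)) * (v - 1) * (v - p₀ / p₂) := by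
    intro v hv
    have hv2 : (1:ℝ) ≤ v ^ 2 := by nlinarith
    have h1' : 0 < v ^ 2 * p₂ * (b - 1) := by nlinarith [mul_pos h2 (sub_pos.2 hb)]
    have h2' : 0 ≤ (p₂ / (p₀ + p₂)) * (v - 1) * (v - p₀ / p₂) := by
      have hv' : p₀ / p₂ ≤ v := by
        have : p₀ / p₂ < 1 := (div_lt_one h2).2 h02
        linarith
      have hq : 0 < p₂ / (p₀ + p₂) := div_pos h2 hpos
      have := mul_nonneg (mul_nonneg hq.le (by linarith : (0:ℝ) ≤ v - 1))
        (by linarith : (0:ℝ) ≤ v - p₀ / p₂)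
      linarith [this]
    linarith
  constructor
  · intro v hv
    exact ne_of_gt (key v hv)
  · rintro u v hv ⟨e1, e2⟩
    apply ne_of_gt (key v hv)
    field_simp
    linear_combination (p₀+p₂)*e2 - (p₀+p₂)*e1 + e1 - u*hsum
end

section
/- Let p₁, p₂ > 0 with p₁ + p₂ = 1 and b > 1. With (u_n, v_n) defined by (u₀,v₀)=(1,1) and (u_{n+1},v_{n+1}) = (p₁u_n + p₂v_n², p₁u_n + b p₂ v_n²), the sequences u_n and v_n both tend to infinity as n → ∞. -/
noncomputable def orbit (p₁ p₂ b : ℝ) : ℕ → ℝ × ℝ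
  | 0 => (1, 1)
  | n + 1 =>
      (p₁ * (orbit p₁ p₂ b n).1 + p₂ * (orbit p₁ p₂ b n).2 ^ 2,
       p₁ * (orbit p₁ p₂ b n).1 + b * p₂ * (orbit p₁ p₂ b n).2 ^ 2)

theorem stmt_10 (p₁ p₂ b : ℝ) (h1 : 0 < p₁) (h2 : 0 < p₂) (hsum : p₁ + p₂ = 1)
    (hb : 1 < b) :
    Filter.Tendsto (fun n => (orbit p₁ p₂ b n).1) Filter.atTop Filter.atTop ∧
    Filter.Tendsto (fun n => (orbit p₁ p₂ b n).2) Filter.atTop Filter.atTop := by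
  set u : ℕ → ℝ := fun n => (orbit p₁ p₂ b n).1 with hu
  set v : ℕ → ℝ := fun n => (orbit p₁ p₂ b n).2 with hv
  have hrecu : ∀ n, u (n + 1) = p₁ * u n + p₂ * v n ^ 2 := fun n => rfl
  have hrecv : ∀ n, v (n + 1) = p₁ * u n + b * p₂ * v n ^ 2 := fun n => rfl
  have hu0 : u 0 = 1 := rfl
  have hv0 : v 0 = 1 := rfl
  -- basic bounds
  have key : ∀ n, 1 ≤ u n ∧ 1 ≤ v n ∧ u n ≤ v n := by
    intro n
    induction n with
    | zero => simp [hu0, hv0]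
    | succ n ih =>
      obtain ⟨h1', h2', h3'⟩ := ih
      refine ⟨?_, ?_, ?_⟩
      · rw [hrecu]; nlinarith [sq_nonneg (v n - 1)]
      · rw [hrecv]
        have ha : 0 ≤ p₁ * (u n - 1) := mul_nonneg h1.le (by linarith)
        have hb2 : 0 ≤ p₂ * (b * v n ^ 2 - 1) := mul_nonneg h2.le (by nlinarith)
        nlinarith
      · rw [hrecu, hrecv]
        have : 0 ≤ (b - 1) * p₂ * v n ^ 2 :=
          mul_nonneg (mul_nonneg (by linarith) h2.le) (sq_nonneg _)
        linarith
  -- monotonicity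
  have mono : ∀ n, u n ≤ u (n + 1) ∧ v n ≤ v (n + 1) := by
    intro n
    induction n with
    | zero =>
      constructor
      · rw [hrecu, hu0, hv0]; nlinarith
      · rw [hrecv, hu0, hv0]; nlinarith
    | succ n ih =>
      obtain ⟨hmu, hmv⟩ := ih
      obtain ⟨h1', h2', h3'⟩ := key n
      have hvs : v n ^ 2 ≤ v (n + 1) ^ 2 := by nlinarith [(key (n+1)).2.1]
      constructor
      · rw [hrecu, hrecu]; nlinarith
      · rw [hrecv, hrecv]
        have ha : 0 ≤ p₁ * (u (n + 1) - u n) := mul_nonneg h1.le (by linarith)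
        have hb2 : 0 ≤ b * p₂ * (v (n + 1) ^ 2 - v n ^ 2) :=
          mul_nonneg (mul_nonneg (by linarith) h2.le) (by linarith)
        linarith
  have hmu : Monotone u := monotone_nat_of_le_succ fun n => (mono n).1
  have hmv : Monotone v := monotone_nat_of_le_succ fun n => (mono n).2
  -- v tends to infinity
  have hvtop : Filter.Tendsto v Filter.atTop Filter.atTop := by
    rcases tendsto_of_monotone hmv with h | ⟨M, hM⟩
    · exact h
    exfalso
    rcases tendsto_of_monotone hmu with h | ⟨L, hL⟩
    · have : Filter.Tendsto v Filter.atTop Filter.atTop :=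
        Filter.tendsto_atTop_mono (fun n => (key n).2.2) h
      exact not_tendsto_atTop_of_tendsto_nhds hM this
    -- both converge: limit equations
    have hL1 : Filter.Tendsto (fun n => u (n + 1)) Filter.atTop (nhds L) :=
      hL.comp (Filter.tendsto_add_atTop_nat 1)
    have hM1 : Filter.Tendsto (fun n => v (n + 1)) Filter.atTop (nhds M) :=
      hM.comp (Filter.tendsto_add_atTop_nat 1)
    have hrhsu : Filter.Tendsto (fun n => p₁ * u n + p₂ * v n ^ 2) Filter.atTop
        (nhds (p₁ * L + p₂ * M ^ 2)) :=
      ((hL.const_mul p₁).add (((hM.pow 2)).const_mul p₂))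
    have hrhsv : Filter.Tendsto (fun n => p₁ * u n + b * p₂ * v n ^ 2) Filter.atTop
        (nhds (p₁ * L + b * p₂ * M ^ 2)) :=
      ((hL.const_mul p₁).add (((hM.pow 2)).const_mul (b * p₂)))
    have eqL : L = p₁ * L + p₂ * M ^ 2 := by
      refine tendsto_nhds_unique hL1 ?_
      simpa only [hrecu] using hrhsu
    have eqM : M = p₁ * L + b * p₂ * M ^ 2 := by
      refine tendsto_nhds_unique hM1 ?_
      simpa only [hrecv] using hrhsv
    have hMge : v 1 ≤ M := by
      refine ge_of_tendsto hM ?_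
      filter_upwards [Filter.eventually_ge_atTop 1] with n hn
      exact hmv hn
    have hv1 : v 1 = p₁ + b * p₂ := by rw [hrecv, hu0, hv0]; ring
    have hM1' : 1 < M := by rw [hv1] at hMge; nlinarith
    -- p₂ L = p₂ M² from eqL and p₁ + p₂ = 1
    have hLM : L = M ^ 2 := by
      have : p₂ * L = p₂ * M ^ 2 := by linear_combination eqL + L * hsum
      exact mul_left_cancel₀ (ne_of_gt h2) this
    nlinarith [hLM, mul_pos h2 (sub_pos.mpr hb), sq_nonneg (M - 1), mul_pos (mul_pos h2 (sub_pos.mpr hb)) (mul_pos (lt_trans one_pos hM1') (lt_trans one_pos hM1'))]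
  -- u tends to infinity
  have hutop : Filter.Tendsto u Filter.atTop Filter.atTop := by
    have hsq : Filter.Tendsto (fun n => p₂ * v n ^ 2) Filter.atTop Filter.atTop := by
      have := (Filter.tendsto_pow_atTop (n := 2) two_ne_zero).comp hvtop
      exact Filter.Tendsto.const_mul_atTop h2 this
    have h1' : Filter.Tendsto (fun n => u (n + 1)) Filter.atTop Filter.atTop := by
      refine Filter.tendsto_atTop_mono (fun n => ?_) hsq
      rw [hrecu]
      nlinarith [(key n).1]
    exact (Filter.tendsto_add_atTop_iff_nat 1).mp h1'
  exact ⟨hutop, hvtop⟩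
end

section
/- Let p₁, p₂ > 0 with p₁ + p₂ = 1 and b > 1, and (u_n, v_n) the orbit of (1,1) under F(u,v) = (p₁u + p₂v², p₁u + b p₂v²). Then v_n > p₂ b v_{n-1}² for all n ≥ 1, and consequently the sequence n ↦ (p₂ b v_n)^{2^{-n}} is strictly increasing. -/
theorem stmt_11 (p₁ p₂ b : ℝ) (h1 : 0 < p₁) (h2 : 0 < p₂) (hsum : p₁ + p₂ = 1)
    (hb : 1 < b) :
    (∀ n : ℕ, 1 ≤ n → (orbit p₁ p₂ b n).2 > p₂ * b * (orbit p₁ p₂ b (n - 1)).2 ^ 2) ∧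
    StrictMono (fun n : ℕ => (p₂ * b * (orbit p₁ p₂ b n).2) ^ ((2 : ℝ)⁻¹ ^ n)) := by
  have key : ∀ n : ℕ, 1 ≤ (orbit p₁ p₂ b n).1 ∧ 1 ≤ (orbit p₁ p₂ b n).2 := by
    intro n
    induction n with
    | zero => simp [orbit]
    | succ n ih =>
      obtain ⟨hu, hv⟩ := ih
      have hv2 : 1 ≤ (orbit p₁ p₂ b n).2 ^ 2 := one_le_pow₀ hv
      constructor
      · show 1 ≤ p₁ * (orbit p₁ p₂ b n).1 + p₂ * (orbit p₁ p₂ b n).2 ^ 2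
        nlinarith
      · show 1 ≤ p₁ * (orbit p₁ p₂ b n).1 + b * p₂ * (orbit p₁ p₂ b n).2 ^ 2
        nlinarith [mul_lt_mul_of_pos_right hb (show (0:ℝ) < p₂*(orbit p₁ p₂ b n).2^2 by positivity), mul_le_mul_of_nonneg_left hv2 h2.le, mul_le_mul_of_nonneg_left hu h1.le]
  have main : ∀ n : ℕ, 1 ≤ n → (orbit p₁ p₂ b n).2 > p₂ * b * (orbit p₁ p₂ b (n - 1)).2 ^ 2 := by
    intro n hn
    obtain ⟨m, rfl⟩ : ∃ m, n = m + 1 := ⟨n - 1, (Nat.succ_pred_eq_of_pos hn).symm⟩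
    simp only [Nat.add_sub_cancel]
    show p₁ * (orbit p₁ p₂ b m).1 + b * p₂ * (orbit p₁ p₂ b m).2 ^ 2 >
      p₂ * b * (orbit p₁ p₂ b m).2 ^ 2
    obtain ⟨hu, hv⟩ := key m
    nlinarith
  refine ⟨main, strictMono_nat_of_lt_succ fun n => ?_⟩
  show (p₂ * b * (orbit p₁ p₂ b n).2) ^ ((2:ℝ)⁻¹ ^ n) < (p₂ * b * (orbit p₁ p₂ b (n+1)).2) ^ ((2:ℝ)⁻¹ ^ (n+1))
  have hvn : 1 ≤ (orbit p₁ p₂ b n).2 := (key n).2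
  have hx : (0:ℝ) < p₂ * b * (orbit p₁ p₂ b n).2 := mul_pos (mul_pos h2 (lt_trans one_pos hb)) (lt_of_lt_of_le one_pos hvn)
  have hlt : (p₂ * b * (orbit p₁ p₂ b n).2) ^ 2 < p₂ * b * (orbit p₁ p₂ b (n+1)).2 := by
    have := main (n+1) (by omega)
    simp only [Nat.add_sub_cancel] at this
    nlinarith [sq_nonneg (orbit p₁ p₂ b n).2]
  have hr : (0:ℝ) < (2:ℝ)⁻¹ ^ (n+1) := by positivity
  calc (p₂ * b * (orbit p₁ p₂ b n).2) ^ ((2:ℝ)⁻¹ ^ n)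
      = ((p₂ * b * (orbit p₁ p₂ b n).2) ^ (2:ℝ)) ^ ((2:ℝ)⁻¹ ^ (n+1)) := by
        rw [← Real.rpow_mul hx.le]
        congr 1
        rw [pow_succ]
        ring
    _ < (p₂ * b * (orbit p₁ p₂ b (n+1)).2) ^ ((2:ℝ)⁻¹ ^ (n+1)) := by
        apply Real.rpow_lt_rpow (by positivity) ?_ hr
        rw [show ((2:ℝ)) = ((2:ℕ):ℝ) by norm_num, Real.rpow_natCast]
        exact hlt
    _ = _ := rfl
end

section
/- Let p₁, p₂ > 0 with p₁ + p₂ = 1 and b > 1, and (u_n, v_n) the orbit of (1,1) under F(u,v) = (p₁u + p₂v², p₁u + b p₂v²). Then the limit ρ(b) = lim_{n→∞} (v_n)^{2^{-n}} exists, equals sup_n (p₂ b v_n)^{2^{-n}}, and satisfies √(p₂b(p₁+p₂b)) ≤ ρ(b) ≤ p₁ + p₂b. -/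
theorem stmt_14 (p₁ p₂ b : ℝ) (h1 : 0 < p₁) (h2 : 0 < p₂) (hsum : p₁ + p₂ = 1)
    (hb : 1 < b) :
    ∃ ρ : ℝ,
      Filter.Tendsto (fun n : ℕ => ((orbit p₁ p₂ b n).2) ^ ((2 : ℝ)⁻¹ ^ n))
        Filter.atTop (nhds ρ) ∧
      ρ = ⨆ n : ℕ, (p₂ * b * (orbit p₁ p₂ b n).2) ^ ((2 : ℝ)⁻¹ ^ n) ∧
      Real.sqrt (p₂ * b * (p₁ + p₂ * b)) ≤ ρ ∧ ρ ≤ p₁ + p₂ * b := by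
  set u : ℕ → ℝ := fun n => (orbit p₁ p₂ b n).1 with hu_def
  set v : ℕ → ℝ := fun n => (orbit p₁ p₂ b n).2 with hv_def
  have hA : (1:ℝ) < p₁ + p₂ * b := by nlinarith
  have hApos : (0:ℝ) < p₁ + p₂ * b := by linarith
  have hpb : (0:ℝ) < p₂ * b := by nlinarith
  have horb : ∀ n, u (n+1) = p₁ * u n + p₂ * v n ^ 2 ∧
      v (n+1) = p₁ * u n + b * p₂ * v n ^ 2 := by
    intro n
    constructor <;> simp [hu_def, hv_def, orbit]
  have key : ∀ n, 1 ≤ u n ∧ 1 ≤ v n ∧ u n ≤ v n ∧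
      (p₁ + p₂ * b) * v n ≤ (p₁ + p₂ * b) ^ (2 ^ n) := by
    intro n
    induction n with
    | zero =>
      refine ⟨le_refl _, le_refl _, le_refl _, ?_⟩
      simp [hu_def, hv_def, orbit]
    | succ n ih =>
      obtain ⟨h1u, h1v, huv, hAv⟩ := ih
      obtain ⟨heu, hev⟩ := horb n
      have hv2 : 1 ≤ v n ^ 2 := by nlinarith
      have hvv : v n ≤ v n ^ 2 := by nlinarith
      have g1 : 1 ≤ u (n+1) := by rw [heu]; nlinarith
      have g2 : 1 ≤ v (n+1) := by rw [hev]; nlinarith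
      have g3 : u (n+1) ≤ v (n+1) := by rw [heu, hev]; nlinarith
      refine ⟨g1, g2, g3, ?_⟩
      have hstep : p₁ * u n + b * p₂ * v n ^ 2 ≤ (p₁ + p₂ * b) * v n ^ 2 := by
        nlinarith
      calc (p₁ + p₂ * b) * v (n+1)
          ≤ (p₁ + p₂ * b) * ((p₁ + p₂ * b) * v n ^ 2) := by
            rw [hev]; exact mul_le_mul_of_nonneg_left hstep (le_of_lt hApos)
        _ = ((p₁ + p₂ * b) * v n) ^ 2 := by ring
        _ ≤ ((p₁ + p₂ * b) ^ (2 ^ n)) ^ 2 := by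
            apply pow_le_pow_left₀ _ hAv
            positivity
        _ = (p₁ + p₂ * b) ^ (2 ^ (n+1)) := by rw [← pow_mul, pow_succ]
  set w : ℕ → ℝ := fun n => (p₂ * b * v n) ^ ((2:ℝ)⁻¹ ^ n) with hw_def
  have hvpos : ∀ n, 0 < v n := fun n => lt_of_lt_of_le one_pos (key n).2.1
  have hwbase : ∀ n, 0 < p₂ * b * v n := fun n => mul_pos hpb (hvpos n)
  have hcpos : ∀ n, (0:ℝ) < (2:ℝ)⁻¹ ^ n := fun n => by positivity
  have hcs : ∀ n : ℕ, (2:ℝ) * (2:ℝ)⁻¹ ^ (n+1) = (2:ℝ)⁻¹ ^ n := by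
    intro n; rw [pow_succ]; ring
  -- monotonicity
  have hmono : Monotone w := by
    apply monotone_nat_of_le_succ
    intro n
    have hun : 0 < u n := lt_of_lt_of_le one_pos (key n).1
    have hineq : (p₂ * b * v n) ^ (2:ℕ) ≤ p₂ * b * v (n+1) := by
      rw [(horb n).2]
      nlinarith [mul_pos hpb (mul_pos h1 hun)]
    have hce : ((2:ℕ):ℝ) * (2:ℝ)⁻¹ ^ (n+1) = (2:ℝ)⁻¹ ^ n := by
      push_cast
      rw [pow_succ]
      ring
    calc w n = ((p₂ * b * v n) ^ (2:ℕ)) ^ ((2:ℝ)⁻¹ ^ (n+1)) := by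
          rw [← Real.rpow_natCast (p₂ * b * v n) 2,
            ← Real.rpow_mul (le_of_lt (hwbase n)), hce]
      _ ≤ (p₂ * b * v (n+1)) ^ ((2:ℝ)⁻¹ ^ (n+1)) :=
          Real.rpow_le_rpow (by positivity) hineq (le_of_lt (hcpos _))
      _ = w (n+1) := rfl
  -- boundedness
  have hub : ∀ n, w n ≤ p₁ + p₂ * b := by
    intro n
    have h1' : p₂ * b * v n ≤ (p₁ + p₂ * b) ^ (2 ^ n) := by
      have : p₂ * b * v n ≤ (p₁ + p₂ * b) * v n :=
        mul_le_mul_of_nonneg_right (by linarith) (le_of_lt (hvpos n))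
      linarith [(key n).2.2.2]
    have h2' : w n ≤ ((p₁ + p₂ * b) ^ (2 ^ n)) ^ ((2:ℝ)⁻¹ ^ n) :=
      Real.rpow_le_rpow (le_of_lt (hwbase n)) h1' (le_of_lt (hcpos n))
    have h3' : ((p₁ + p₂ * b) ^ (2 ^ n)) ^ ((2:ℝ)⁻¹ ^ n) = p₁ + p₂ * b := by
      rw [← Real.rpow_natCast (p₁ + p₂ * b) (2 ^ n),
        ← Real.rpow_mul (le_of_lt hApos)]
      have : ((2 ^ n : ℕ) : ℝ) * (2:ℝ)⁻¹ ^ n = 1 := by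
        push_cast
        rw [← mul_pow]
        norm_num
      rw [this, Real.rpow_one]
    rw [h3'] at h2'
    exact h2'
  have hbdd : BddAbove (Set.range w) := by
    refine ⟨p₁ + p₂ * b, ?_⟩
    rintro _ ⟨n, rfl⟩
    exact hub n
  set ρ := ⨆ n, w n with hρ_def
  have htw : Filter.Tendsto w Filter.atTop (nhds ρ) :=
    tendsto_atTop_ciSup hmono hbdd
  refine ⟨ρ, ?_, rfl, ?_, ciSup_le hub⟩
  · -- main limit
    have hc0 : Filter.Tendsto (fun n : ℕ => (2:ℝ)⁻¹ ^ n) Filter.atTop (nhds 0) :=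
      tendsto_pow_atTop_nhds_zero_of_lt_one (by norm_num) (by norm_num)
    have ht1 : Filter.Tendsto (fun n : ℕ => (p₂ * b) ^ ((2:ℝ)⁻¹ ^ n))
        Filter.atTop (nhds 1) := by
      have h := hc0.const_mul (Real.log (p₂ * b))
      rw [mul_zero] at h
      have hexp := (Real.continuous_exp.tendsto 0).comp h
      rw [Real.exp_zero] at hexp
      refine hexp.congr fun n => ?_
      simp only [Function.comp]
      rw [Real.rpow_def_of_pos hpb]
    have heq : ∀ n, v n ^ ((2:ℝ)⁻¹ ^ n) = w n / (p₂ * b) ^ ((2:ℝ)⁻¹ ^ n) := by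
      intro n
      rw [eq_div_iff (ne_of_gt (Real.rpow_pos_of_pos hpb _))]
      calc v n ^ ((2:ℝ)⁻¹ ^ n) * (p₂ * b) ^ ((2:ℝ)⁻¹ ^ n)
          = (p₂ * b) ^ ((2:ℝ)⁻¹ ^ n) * v n ^ ((2:ℝ)⁻¹ ^ n) := by ring
        _ = (p₂ * b * v n) ^ ((2:ℝ)⁻¹ ^ n) :=
            (Real.mul_rpow (le_of_lt hpb) (le_of_lt (hvpos n))).symm
        _ = w n := rfl
    have := htw.div ht1 one_ne_zero
    rw [div_one] at this
    exact this.congr fun n => (heq n).symm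
  · -- sqrt lower bound
    have hv1 : v 1 = p₁ + b * p₂ := by
      simp [hv_def, orbit]
    have hw1 : Real.sqrt (p₂ * b * (p₁ + p₂ * b)) = w 1 := by
      rw [hw_def]
      simp only [pow_one, hv1]
      rw [Real.sqrt_eq_rpow]
      congr 1
      · ring
      · norm_num
    rw [hw1]
    exact le_ciSup hbdd 1
end

section
/- Let p₁, p₂ > 0 with p₁ + p₂ = 1 and b > 1, and (u_n, v_n) the orbit of (1,1) under F(u,v) = (p₁u + p₂v², p₁u + b p₂v²). Then lim_{n→∞} (u_n)^{2^{-n}} exists and equals lim_{n→∞} (v_n)^{2^{-n}}. -/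
theorem stmt_15 (p₁ p₂ b : ℝ) (h1 : 0 < p₁) (h2 : 0 < p₂) (hsum : p₁ + p₂ = 1)
    (hb : 1 < b) :
    ∃ ρ : ℝ,
      Filter.Tendsto (fun n : ℕ => ((orbit p₁ p₂ b n).1) ^ ((2 : ℝ)⁻¹ ^ n))
        Filter.atTop (nhds ρ) ∧
      Filter.Tendsto (fun n : ℕ => ((orbit p₁ p₂ b n).2) ^ ((2 : ℝ)⁻¹ ^ n))
        Filter.atTop (nhds ρ) := by
  set u : ℕ → ℝ := fun n => (orbit p₁ p₂ b n).1 with hu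
  set v : ℕ → ℝ := fun n => (orbit p₁ p₂ b n).2 with hv
  have hU : ∀ n, u (n+1) = p₁ * u n + p₂ * (v n)^2 := fun n => rfl
  have hV : ∀ n, v (n+1) = p₁ * u n + b * p₂ * (v n)^2 := fun n => rfl
  have key : ∀ n, 1 ≤ u n ∧ u n ≤ v n ∧ v n ≤ b * u n := by
    intro n
    induction n with
    | zero =>
      refine ⟨le_refl _, le_refl _, ?_⟩
      show (1:ℝ) ≤ b * 1
      nlinarith
    | succ n ih =>
      obtain ⟨h1', h2', h3'⟩ := ih
      have hv1 : 1 ≤ v n := le_trans h1' h2'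
      have hv2 : 1 ≤ (v n)^2 := by nlinarith
      have hvn0 : 0 ≤ v n := by linarith
      have hun0 : 0 ≤ u n := by linarith
      rw [hU, hV]
      refine ⟨?_, ?_, ?_⟩
      · nlinarith [mul_le_mul_of_nonneg_left hv2 h2.le,
          mul_le_mul_of_nonneg_left h1' h1.le]
      · nlinarith [mul_nonneg (mul_nonneg (by linarith : (0:ℝ) ≤ b - 1) h2.le)
          (sq_nonneg (v n))]
      · nlinarith [mul_nonneg (mul_nonneg (by linarith : (0:ℝ) ≤ b - 1) h1.le) hun0]
  have hup : ∀ n, 0 < u n := fun n => lt_of_lt_of_le one_pos (key n).1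
  have hvp : ∀ n, 0 < v n := fun n => lt_of_lt_of_le (hup n) (key n).2.1
  set C : ℝ := p₁ + p₂ * b^2 with hC
  have hb2 : 1 ≤ b^2 := by nlinarith
  have hC1 : 1 ≤ C := by
    rw [hC]; nlinarith [mul_le_mul_of_nonneg_left hb2 h2.le]
  have hCpos : (0:ℝ) < C := lt_of_lt_of_le one_pos hC1
  have hlogC : 0 ≤ Real.log C := Real.log_nonneg hC1
  -- bounds on u (n+1)
  have bound : ∀ n, p₂ * (u n)^2 ≤ u (n+1) ∧ u (n+1) ≤ C * (u n)^2 := by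
    intro n
    obtain ⟨k1, k2, k3⟩ := key n
    have hun0 : (0:ℝ) ≤ u n := by linarith
    have hvn0 : (0:ℝ) ≤ v n := by linarith
    have huv2 : (u n)^2 ≤ (v n)^2 := by nlinarith
    have hvb2 : (v n)^2 ≤ b^2 * (u n)^2 := by nlinarith
    constructor
    · rw [hU]
      nlinarith [mul_le_mul_of_nonneg_left huv2 h2.le, mul_nonneg h1.le hun0]
    · rw [hU, hC]
      nlinarith [mul_le_mul_of_nonneg_left hvb2 h2.le,
        mul_le_mul_of_nonneg_left k1 (mul_nonneg h1.le hun0)]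
  have logbound : ∀ n, Real.log p₂ + 2 * Real.log (u n) ≤ Real.log (u (n+1)) ∧
      Real.log (u (n+1)) ≤ Real.log C + 2 * Real.log (u n) := by
    intro n
    obtain ⟨b1, b2⟩ := bound n
    have e1 : Real.log (p₂ * (u n)^2) = Real.log p₂ + 2 * Real.log (u n) := by
      rw [Real.log_mul (ne_of_gt h2) (pow_pos (hup n) 2).ne', Real.log_pow]
      push_cast; ring
    have e2 : Real.log (C * (u n)^2) = Real.log C + 2 * Real.log (u n) := by
      rw [Real.log_mul hCpos.ne' (pow_pos (hup n) 2).ne', Real.log_pow]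
      push_cast; ring
    constructor
    · rw [← e1]; exact Real.log_le_log (mul_pos h2 (pow_pos (hup n) 2)) b1
    · rw [← e2]
      exact Real.log_le_log (lt_of_lt_of_le (mul_pos h2 (pow_pos (hup n) 2)) b1) b2
  set a : ℕ → ℝ := fun n => (2:ℝ)⁻¹ ^ n * Real.log (u n) with ha
  set M : ℝ := max (-Real.log p₂) (Real.log C) with hM
  have hM0 : 0 ≤ M := le_trans hlogC (le_max_right _ _)
  have hcauchy : CauchySeq a := by
    apply cauchySeq_of_le_geometric (2:ℝ)⁻¹ (M/2) (by norm_num)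
    intro n
    obtain ⟨l1, l2⟩ := logbound n
    have hd : a (n+1) - a n = (2:ℝ)⁻¹ ^ (n+1) *
        (Real.log (u (n+1)) - 2 * Real.log (u n)) := by
      simp only [ha, pow_succ]; ring
    rw [Real.dist_eq, abs_sub_comm, hd, abs_mul, abs_of_nonneg (by positivity)]
    have habs : |Real.log (u (n+1)) - 2 * Real.log (u n)| ≤ M := by
      rw [abs_le]
      constructor
      · have := le_max_left (-Real.log p₂) (Real.log C)
        rw [← hM] at this; linarith
      · have := le_max_right (-Real.log p₂) (Real.log C)
        rw [← hM] at this; linarith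
    calc (2:ℝ)⁻¹ ^ (n+1) * |Real.log (u (n+1)) - 2 * Real.log (u n)|
        ≤ (2:ℝ)⁻¹ ^ (n+1) * M := by
          apply mul_le_mul_of_nonneg_left habs (by positivity)
      _ = M/2 * (2:ℝ)⁻¹ ^ n := by rw [pow_succ]; ring
  obtain ⟨L, hL⟩ := cauchySeq_tendsto_of_complete hcauchy
  refine ⟨Real.exp L, ?_, ?_⟩
  · have : Filter.Tendsto (fun n => Real.exp (a n)) Filter.atTop (nhds (Real.exp L)) :=
      (Real.continuous_exp.tendsto L).comp hL
    refine this.congr fun n => ?_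
    rw [ha, Real.rpow_def_of_pos (hup n)]
    ring_nf
  · have hdiff : Filter.Tendsto
        (fun n => (2:ℝ)⁻¹ ^ n * (Real.log (v n) - Real.log (u n)))
        Filter.atTop (nhds 0) := by
      have hgeo : Filter.Tendsto (fun n : ℕ => (2:ℝ)⁻¹ ^ n * Real.log b)
          Filter.atTop (nhds 0) := by
        have := (tendsto_pow_atTop_nhds_zero_of_lt_one (by norm_num : (0:ℝ) ≤ 2⁻¹)
          (by norm_num : (2:ℝ)⁻¹ < 1)).mul_const (Real.log b)
        simpa using this
      apply squeeze_zero (fun n => ?_) (fun n => ?_) hgeo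
      · have h0 : 0 ≤ Real.log (v n) - Real.log (u n) :=
          sub_nonneg.2 (Real.log_le_log (hup n) (key n).2.1)
        exact mul_nonneg (by positivity) h0
      · refine mul_le_mul_of_nonneg_left ?_ (by positivity)
        have h1n : Real.log (v n) ≤ Real.log b + Real.log (u n) := by
          have := Real.log_le_log (hvp n) (key n).2.2
          rwa [Real.log_mul (by positivity) (ne_of_gt (hup n))] at this
        linarith
    have hsum' : Filter.Tendsto
        (fun n => a n + (2:ℝ)⁻¹ ^ n * (Real.log (v n) - Real.log (u n)))
        Filter.atTop (nhds (L + 0)) := hL.add hdiff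
    rw [add_zero] at hsum'
    have : Filter.Tendsto (fun n => Real.exp (a n +
        (2:ℝ)⁻¹ ^ n * (Real.log (v n) - Real.log (u n))))
        Filter.atTop (nhds (Real.exp L)) :=
      (Real.continuous_exp.tendsto L).comp hsum'
    refine this.congr fun n => ?_
    rw [ha, Real.rpow_def_of_pos (hvp n)]
    ring_nf
end

section
/- Let p₁, p₂ > 0 with p₁ + p₂ = 1 and b > 1, and define ρ(b) = lim_{n→∞}(v_n)^{2^{-n}} for the orbit of (1,1) under F(u,v) = (p₁u + p₂v², p₁u + b p₂v²). Then ρ(b) > 1, and the free energy ψ(b) = lim_{n→∞} -(2^{n+1}-1)^{-1} log v_{n+1} exists and equals -log ρ(b). -/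
theorem stmt_17 (p₁ p₂ b : ℝ) (h1 : 0 < p₁) (h2 : 0 < p₂) (hsum : p₁ + p₂ = 1)
    (hb : 1 < b) (ρ : ℝ)
    (hρ : Filter.Tendsto (fun n : ℕ => ((orbit p₁ p₂ b n).2) ^ ((2 : ℝ)⁻¹ ^ n))
      Filter.atTop (nhds ρ)) :
    1 < ρ ∧
    Filter.Tendsto
      (fun n : ℕ => -(((2 : ℝ) ^ (n + 1) - 1)⁻¹ * Real.log ((orbit p₁ p₂ b (n + 1)).2)))
      Filter.atTop (nhds (-Real.log ρ)) := by
  set u : ℕ → ℝ := fun n => (orbit p₁ p₂ b n).1 with hu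
  set v : ℕ → ℝ := fun n => (orbit p₁ p₂ b n).2 with hv
  have hrec1 : ∀ n, u (n+1) = p₁ * u n + p₂ * v n ^ 2 := fun n => rfl
  have hrec2 : ∀ n, v (n+1) = p₁ * u n + b * p₂ * v n ^ 2 := fun n => rfl
  have hu0 : u 0 = 1 := rfl
  have hv0 : v 0 = 1 := rfl
  -- 1 ≤ u n and 1 ≤ v n
  have hge1 : ∀ n, 1 ≤ u n ∧ 1 ≤ v n := by
    intro n
    induction n with
    | zero => exact ⟨le_of_eq hu0.symm, le_of_eq hv0.symm⟩
    | succ n ih =>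
      obtain ⟨hun, hvn⟩ := ih
      have hbp : (0:ℝ) ≤ (b - 1) * p₂ * v n ^ 2 :=
        mul_nonneg (mul_nonneg (by linarith) h2.le) (sq_nonneg _)
      constructor
      · rw [hrec1]
        nlinarith [sq_nonneg (v n - 1), mul_nonneg h1.le (sub_nonneg.2 hun)]
      · rw [hrec2]
        nlinarith [sq_nonneg (v n - 1), mul_nonneg h1.le (sub_nonneg.2 hun)]
  -- u ≤ v (for n+1)
  have huv : ∀ n, u (n+1) ≤ v (n+1) := by
    intro n
    rw [hrec1, hrec2]
    nlinarith [mul_nonneg (mul_nonneg (by linarith : (0:ℝ) ≤ b - 1) h2.le) (sq_nonneg (v n))]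
  have huv' : ∀ n, u n ≤ v n := by
    intro n
    cases n with
    | zero => rw [hu0, hv0]
    | succ n => exact huv n
  -- monotone
  have hmono : ∀ n, u n ≤ u (n+1) ∧ v n ≤ v (n+1) := by
    intro n
    induction n with
    | zero =>
      constructor
      · rw [hrec1 0, hu0, hv0]; nlinarith
      · rw [hrec2 0, hu0, hv0]; nlinarith
    | succ n ih =>
      obtain ⟨hun, hvn⟩ := ih
      have h0 : (0:ℝ) ≤ v n := le_trans zero_le_one (hge1 n).2
      have hsq : v n ^ 2 ≤ v (n+1) ^ 2 := pow_le_pow_left₀ h0 hvn 2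
      constructor
      · have e1 := hrec1 n; have e2 := hrec1 (n+1)
        nlinarith [mul_nonneg h1.le (sub_nonneg.2 hun), mul_nonneg h2.le (sub_nonneg.2 hsq)]
      · have e1 := hrec2 n; have e2 := hrec2 (n+1)
        nlinarith [mul_nonneg h1.le (sub_nonneg.2 hun),
          mul_nonneg (mul_nonneg (by linarith : (0:ℝ) ≤ b) h2.le) (sub_nonneg.2 hsq)]
  have humono : Monotone u := monotone_nat_of_le_succ (fun n => (hmono n).1)
  have hvmono : Monotone v := monotone_nat_of_le_succ (fun n => (hmono n).2)
  have hv1 : v 1 = p₁ + b * p₂ := by rw [hrec2 0, hu0, hv0]; ring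
  have hv1gt : 1 < v 1 := by rw [hv1]; nlinarith
  set δ : ℝ := v 1 * (v 1 - 1) with hδ
  have hδpos : 0 < δ := mul_pos (lt_trans one_pos hv1gt) (by linarith)
  -- linear growth of u
  have hstep : ∀ n, 1 ≤ n → u n + p₂ * δ ≤ u (n+1) := by
    intro n hn
    have hv1n : v 1 ≤ v n := hvmono hn
    have huvn := huv' n
    have := (hge1 n).1
    rw [hrec1]
    -- u(n+1) - u n = (p₁-1) u n + p₂ v n ^2 = p₂ (v n ^2 - u n)
    have hp1 : p₁ = 1 - p₂ := by linarith
    rw [hp1]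
    nlinarith [mul_nonneg (sub_nonneg.2 hv1n) (by linarith : (0:ℝ) ≤ v n + v 1 - 1),
      mul_nonneg h2.le (mul_nonneg (sub_nonneg.2 hv1n) (by linarith : (0:ℝ) ≤ v n + v 1 - 1)),
      mul_nonneg h2.le (sub_nonneg.2 huvn)]
  have hlin : ∀ m : ℕ, 1 + m * (p₂ * δ) ≤ u (m+1) := by
    intro m
    induction m with
    | zero => simp; rw [hrec1 0, hu0, hv0]; nlinarith
    | succ m ih =>
      have := hstep (m+1) (by omega)
      push_cast
      push_cast at ih
      linarith
  -- find N with 2 ≤ b*p₂*v N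
  have hbp2 : 0 < b * p₂ := mul_pos (lt_trans one_pos hb) h2
  obtain ⟨m, hm⟩ := exists_nat_gt (2 / (b * p₂ * (p₂ * δ)))
  set N : ℕ := m + 1 with hN
  have hN2 : 2 ≤ b * p₂ * v N := by
    have h1lin : 1 + (m:ℝ) * (p₂ * δ) ≤ u N := hlin m
    have huvN : u N ≤ v N := huv' N
    have hmp : 2 / (b * p₂ * (p₂ * δ)) < (m:ℝ) := hm
    have hpd : 0 < p₂ * δ := mul_pos h2 hδpos
    have h2' : 2 < (m:ℝ) * (p₂ * δ) * (b * p₂ * (p₂ * δ)) / (p₂ * δ) := by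
      rw [div_lt_iff₀ (mul_pos hbp2 hpd)] at hmp
      rw [lt_div_iff₀ hpd]
      nlinarith
    have h2'' : 2 < (m:ℝ) * (p₂ * δ) * (b * p₂) := by
      have : (m:ℝ) * (p₂ * δ) * (b * p₂ * (p₂ * δ)) / (p₂ * δ) = (m:ℝ) * (p₂ * δ) * (b * p₂) := by
        field_simp
      linarith [this ▸ h2']
    nlinarith
  -- doubling
  have hdouble : ∀ k : ℕ, (2:ℝ) ^ (2 ^ k) ≤ b * p₂ * v (N + k) := by
    intro k
    induction k with
    | zero => simpa using hN2
    | succ k ih =>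
      have hpos : (0:ℝ) < (2:ℝ) ^ (2 ^ k) := by positivity
      have hv2 : (b * p₂ * v (N + k)) ^ 2 ≤ b * p₂ * v (N + k + 1) := by
        have e := hrec2 (N + k)
        have hu' : 0 ≤ u (N + k) := le_trans zero_le_one (hge1 (N+k)).1
        have : b * p₂ * v (N + k + 1) = b * p₂ * (p₁ * u (N + k)) + (b * p₂) * (b * p₂ * v (N+k)^2) := by
          rw [e]; ring
        nlinarith [mul_nonneg (mul_nonneg hbp2.le h1.le) hu']
      calc (2:ℝ) ^ (2 ^ (k+1)) = ((2:ℝ) ^ (2 ^ k)) ^ 2 := by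
            rw [← pow_mul]; ring_nf
        _ ≤ (b * p₂ * v (N + k)) ^ 2 := by
            apply pow_le_pow_left₀ hpos.le ih
        _ ≤ b * p₂ * v (N + k + 1) := hv2
  -- lower bound on v n for n ≥ N
  have hvNk : ∀ n, N ≤ n → (2:ℝ) ^ (2 ^ (n - N)) / (b * p₂) ≤ v n := by
    intro n hn
    have := hdouble (n - N)
    rw [div_le_iff₀ hbp2]
    have hEq : N + (n - N) = n := by omega
    rw [hEq] at this
    linarith
  -- exponent identity
  have hexp : ∀ n, N ≤ n → ((2:ℝ) ^ (n - N)) * ((2:ℝ)⁻¹ ^ n) = (2:ℝ)⁻¹ ^ N := by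
    intro n hn
    obtain ⟨k, rfl⟩ : ∃ k, n = N + k := ⟨n - N, by omega⟩
    have h1' : N + k - N = k := by omega
    rw [h1', pow_add]
    have : (2:ℝ) ^ k * (2:ℝ)⁻¹ ^ k = 1 := by
      rw [← mul_pow]; norm_num
    calc (2:ℝ) ^ k * ((2:ℝ)⁻¹ ^ N * (2:ℝ)⁻¹ ^ k)
        = ((2:ℝ) ^ k * (2:ℝ)⁻¹ ^ k) * (2:ℝ)⁻¹ ^ N := by ring
      _ = (2:ℝ)⁻¹ ^ N := by rw [this, one_mul]
  set C : ℝ := (2:ℝ) ^ ((2:ℝ)⁻¹ ^ N : ℝ) with hC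
  have hlow : ∀ n, N ≤ n → C / (b * p₂) ^ ((2:ℝ)⁻¹ ^ n : ℝ) ≤ v n ^ ((2:ℝ)⁻¹ ^ n : ℝ) := by
    intro n hn
    have he : (0:ℝ) ≤ (2:ℝ)⁻¹ ^ n := by positivity
    have hmain : ((2:ℝ) ^ (2 ^ (n - N)) / (b * p₂)) ^ ((2:ℝ)⁻¹ ^ n : ℝ)
        ≤ v n ^ ((2:ℝ)⁻¹ ^ n : ℝ) :=
      Real.rpow_le_rpow (by positivity) (hvNk n hn) he
    have hrw : ((2:ℝ) ^ (2 ^ (n - N)) / (b * p₂)) ^ ((2:ℝ)⁻¹ ^ n : ℝ)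
        = C / (b * p₂) ^ ((2:ℝ)⁻¹ ^ n : ℝ) := by
      rw [Real.div_rpow (by positivity) hbp2.le]
      congr 1
      rw [← Real.rpow_natCast (2:ℝ) (2 ^ (n - N)), ← Real.rpow_mul (by norm_num : (0:ℝ) ≤ 2)]
      rw [hC]
      congr 1
      push_cast
      exact hexp n hn
    rw [hrw] at hmain
    exact hmain
  -- limit of the lower bound
  have htend0 : Filter.Tendsto (fun n : ℕ => ((2:ℝ)⁻¹) ^ n) Filter.atTop (nhds 0) :=
    tendsto_pow_atTop_nhds_zero_of_lt_one (by norm_num) (by norm_num)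
  have hden : Filter.Tendsto (fun n : ℕ => (b * p₂) ^ ((2:ℝ)⁻¹ ^ n : ℝ)) Filter.atTop (nhds 1) := by
    have hcont : ContinuousAt (fun x : ℝ => (b * p₂) ^ x) 0 :=
      Real.continuousAt_const_rpow hbp2.ne'
    have := hcont.tendsto.comp htend0
    simpa [Real.rpow_zero, Function.comp_def] using this
  have hlowlim : Filter.Tendsto (fun n : ℕ => C / (b * p₂) ^ ((2:ℝ)⁻¹ ^ n : ℝ))
      Filter.atTop (nhds C) := by
    have := (tendsto_const_nhds : Filter.Tendsto (fun _ : ℕ => C) Filter.atTop (nhds C)).div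
      hden one_ne_zero
    simpa [Pi.div_def] using this
  have hCρ : C ≤ ρ := by
    refine le_of_tendsto_of_tendsto hlowlim hρ ?_
    filter_upwards [Filter.eventually_ge_atTop N] with n hn
    exact hlow n hn
  have hC1 : 1 < C := by
    rw [hC]
    apply Real.one_lt_rpow_iff_of_pos (by norm_num) |>.2
    exact Or.inl ⟨one_lt_two, by positivity⟩
  have hρ1 : 1 < ρ := lt_of_lt_of_le hC1 hCρ
  have hρpos : 0 < ρ := lt_trans one_pos hρ1
  refine ⟨hρ1, ?_⟩
  -- part 2
  have hs : Filter.Tendsto (fun n : ℕ => v (n+1) ^ ((2:ℝ)⁻¹ ^ (n+1) : ℝ))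
      Filter.atTop (nhds ρ) := hρ.comp (Filter.tendsto_add_atTop_nat 1)
  have hlog : Filter.Tendsto (fun n : ℕ => ((2:ℝ)⁻¹ ^ (n+1)) * Real.log (v (n+1)))
      Filter.atTop (nhds (Real.log ρ)) := by
    have h := (Real.continuousAt_log hρpos.ne').tendsto.comp hs
    have heq : (fun n : ℕ => Real.log (v (n+1) ^ ((2:ℝ)⁻¹ ^ (n+1) : ℝ)))
        = fun n : ℕ => ((2:ℝ)⁻¹ ^ (n+1)) * Real.log (v (n+1)) := by
      funext n
      exact Real.log_rpow (lt_of_lt_of_le one_pos (hge1 (n+1)).2) _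
    have h' : Filter.Tendsto (fun n : ℕ => Real.log (v (n+1) ^ ((2:ℝ)⁻¹ ^ (n+1) : ℝ)))
        Filter.atTop (nhds (Real.log ρ)) := by
      simpa [Function.comp_def] using h
    rwa [heq] at h'
  have hfac : Filter.Tendsto (fun n : ℕ => (1 - ((2:ℝ)⁻¹) ^ (n+1))⁻¹) Filter.atTop (nhds 1) := by
    have hg : Filter.Tendsto (fun n : ℕ => ((2:ℝ)⁻¹) ^ (n+1)) Filter.atTop (nhds 0) :=
      htend0.comp (Filter.tendsto_add_atTop_nat 1)
    have := ((tendsto_const_nhds : Filter.Tendsto (fun _ : ℕ => (1:ℝ)) Filter.atTop (nhds 1)).sub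
      hg).inv₀ (by norm_num)
    simpa using this
  have hmul := hfac.mul hlog
  rw [one_mul] at hmul
  have hkey : (fun n : ℕ => (1 - ((2:ℝ)⁻¹) ^ (n+1))⁻¹ * (((2:ℝ)⁻¹ ^ (n+1)) * Real.log (v (n+1))))
      = fun n : ℕ => ((2:ℝ) ^ (n+1) - 1)⁻¹ * Real.log (v (n+1)) := by
    funext n
    have hp : (1:ℝ) < 2 ^ (n+1) := one_lt_pow₀ (by norm_num) (Nat.succ_ne_zero n)
    have h2p : (0:ℝ) < 2 ^ (n+1) := by positivity
    rw [← mul_assoc]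
    congr 1
    have hxne : ((2:ℝ) ^ (n+1)) ≠ 0 := h2p.ne'
    rw [inv_pow, ← mul_inv]
    congr 1
    rw [sub_mul, inv_mul_cancel₀ hxne, one_mul]
  rw [hkey] at hmul
  exact hmul.neg
end
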